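/- In the hard-label estimation setting, suppose there exists a constant c > 0 such that |η(x) − 1/2| ≥ c holds P_X-almost surely. Then −(1−4c²)/(8cm) ≤ E[β̂(η̂_{1:n})] − β* ≤ 0, where β̂(η̂_{1:n}) = (1/n)∑_{i=1}^n min{η̂_i, 1−η̂_i} and each η̂_i is the average of m conditionally independent Bernoulli(η(x_i)) hard labels given an i.i.d. instance x_i ∼ P_X. -/

import Mathlib

open MeasureTheory ProbabilityTheory
set_option maxHeartbeats 1000000


section auxpi

lemma prod_two {β : Type*} [CommMonoid β] {ι : Type*} [Fintype ι] [DecidableEq ι]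
    (g : ι → β) {j k : ι} (hjk : j ≠ k) (h : ∀ i, i ≠ j → i ≠ k → g i = 1) :
    ∏ i, g i = g j * g k := by
  rw [← Finset.mul_prod_erase _ _ (Finset.mem_univ j),
    ← Finset.mul_prod_erase _ _ (Finset.mem_erase.mpr ⟨Ne.symm hjk, Finset.mem_univ k⟩),
    ← mul_assoc]
  have : ∏ i ∈ (Finset.univ.erase j).erase k, g i = 1 := by
    apply Finset.prod_eq_one
    intro i hi
    simp only [Finset.mem_erase] at hi
    exact h i hi.2.1 hi.1
  rw [this, mul_one]

variable {α : Type*} [MeasurableSpace α] {ν : Measure α} [IsProbabilityMeasure ν]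

lemma pi_integral_single {n : ℕ} (j : Fin n) (g : α → ℝ) :
    ∫ ω : Fin n → α, g (ω j) ∂(Measure.pi fun _ => ν) = ∫ t, g t ∂ν := by
  letI : MeasureSpace α := ⟨ν⟩
  have hv : (volume : Measure α) = ν := rfl
  have h1 : ∀ ω : Fin n → α,
      g (ω j) = ∏ i, (fun t => if i = j then g t else 1) (ω i) := by
    intro ω
    rw [Finset.prod_eq_single_of_mem j (Finset.mem_univ j) (fun i _ hij => if_neg hij)]
    simp
  simp_rw [h1]
  have h2 : (Measure.pi fun _ : Fin n => ν) = (volume : Measure (Fin n → α)) := rfl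
  rw [integral_fintype_prod_eq_prod (f := fun (i : Fin n) t => if i = j then g t else 1)]
  rw [Finset.prod_eq_single_of_mem j (Finset.mem_univ j) (fun i _ hij => by
    simp [if_neg hij, integral_const])]
  simp [hv]

lemma pi_integral_pair {n : ℕ} {j k : Fin n} (hjk : j ≠ k) (g : α → ℝ) :
    ∫ ω : Fin n → α, g (ω j) * g (ω k) ∂(Measure.pi fun _ => ν)
      = (∫ t, g t ∂ν) * (∫ t, g t ∂ν) := by
  letI : MeasureSpace α := ⟨ν⟩
  have hv : (volume : Measure α) = ν := rfl
  have h1 : ∀ ω : Fin n → α,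
      g (ω j) * g (ω k) = ∏ i, (fun t => if i = j ∨ i = k then g t else 1) (ω i) := by
    intro ω
    rw [prod_two _ hjk (fun i hij hik => by simp [if_neg, hij, hik])]
    simp [hjk, Ne.symm hjk]
  simp_rw [h1]
  have h2 : (Measure.pi fun _ : Fin n => ν) = (volume : Measure (Fin n → α)) := rfl
  rw [integral_fintype_prod_eq_prod
    (f := fun (i : Fin n) t => if i = j ∨ i = k then g t else 1)]
  rw [prod_two _ hjk (fun i hij hik => by
    simp [if_neg (by simp [hij, hik] : ¬(i = j ∨ i = k)), integral_const])]
  simp [hjk, Ne.symm hjk, hv]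

lemma pi_integral_formula [MeasurableSingletonClass α] [Fintype α] {n : ℕ}
    (f : (Fin n → α) → ℝ) :
    ∫ ω, f ω ∂(Measure.pi fun _ : Fin n => ν)
      = ∑ ω : Fin n → α, (∏ j, (ν {ω j}).toReal) * f ω := by
  rw [integral_fintype .of_finite]
  congr 1
  ext ω
  rw [Measure.real, show ({ω} : Set (Fin n → α)) = Set.univ.pi (fun j => {ω j}) from
    (Set.univ_pi_singleton ω).symm, Measure.pi_pi, ENNReal.toReal_prod, smul_eq_mul]

end auxpi


noncomputable def bX : Bool → ℝ := fun t => if t then 1 else 0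

lemma bX_mul_self (t : Bool) : bX t * bX t = bX t := by cases t <;> simp [bX]

variable {ν : Measure Bool} [IsProbabilityMeasure ν]

lemma moment1 {m : ℕ} :
    ∫ ω : Fin m → Bool, (∑ j, bX (ω j)) ∂(Measure.pi fun _ => ν)
      = m * ∫ t, bX t ∂ν := by
  rw [integral_finset_sum _ (fun j _ => .of_finite)]
  simp [pi_integral_single (ν := ν), Finset.sum_const]

lemma moment2 {m : ℕ} :
    ∫ ω : Fin m → Bool, (∑ j, bX (ω j))^2 ∂(Measure.pi fun _ => ν)
      = m * (∫ t, bX t ∂ν) + (m^2 - m) * (∫ t, bX t ∂ν)^2 := by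
  set q := ∫ t, bX t ∂ν with hq
  have expand : ∀ ω : Fin m → Bool,
      (∑ j, bX (ω j))^2 = ∑ j, ∑ k, bX (ω j) * bX (ω k) := by
    intro ω; rw [pow_two, Finset.sum_mul_sum]
  simp_rw [expand]
  rw [integral_finset_sum _ (fun j _ => .of_finite)]
  have h1 : ∀ j : Fin m, ∫ ω : Fin m → Bool, (∑ k, bX (ω j) * bX (ω k))
      ∂(Measure.pi fun _ => ν) = ∑ k : Fin m, if j = k then q else q^2 := by
    intro j
    rw [integral_finset_sum _ (fun k _ => .of_finite)]
    congr 1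
    ext k
    by_cases hjk : j = k
    · subst hjk
      simp_rw [bX_mul_self]
      rw [pi_integral_single (ν := ν)]
      simp [hq]
    · rw [pi_integral_pair (ν := ν) hjk, if_neg hjk, pow_two]
  simp_rw [h1]
  have h2 : ∀ j : Fin m, (∑ k : Fin m, if j = k then q else q^2)
      = q^2 * m + (q - q^2) := by
    intro j
    have : ∀ k : Fin m, (if j = k then q else q^2)
        = q^2 + (if j = k then q - q^2 else 0) := by
      intro k; by_cases h : j = k <;> simp [h]
    simp_rw [this]
    rw [Finset.sum_add_distrib, Finset.sum_const, Finset.sum_ite_eq]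
    simp [mul_comm]
  simp_rw [h2]
  rw [Finset.sum_const]
  simp only [Finset.card_univ, Fintype.card_fin, nsmul_eq_mul]
  ring

lemma min_eq_half_sub_abs (a : ℝ) : min a (1 - a) = 1/2 - |a - 1/2| := by
  rcases le_total a (1/2) with h | h
  · rw [abs_of_nonpos (by linarith), min_eq_left (by linarith)]; ring
  · rw [abs_of_nonneg (by linarith), min_eq_right (by linarith)]; ring

lemma core_bounds {m : ℕ} (hm : 0 < m) {ν : Measure Bool} [IsProbabilityMeasure ν]
    {q c : ℝ} (hq : ∫ t, bX t ∂ν = q) (hc : 0 < c) (hcq : c ≤ |q - 1/2|) :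
    min q (1 - q) - (1 - 4*c^2)/(8*c*m) ≤
      (∫ ω : Fin m → Bool, min ((∑ j, bX (ω j))/m) (1 - (∑ j, bX (ω j))/m)
        ∂(Measure.pi fun _ => ν)) ∧
    (∫ ω : Fin m → Bool, min ((∑ j, bX (ω j))/m) (1 - (∑ j, bX (ω j))/m)
        ∂(Measure.pi fun _ => ν)) ≤ min q (1 - q) := by
  have hm' : (0:ℝ) < m := by exact_mod_cast hm
  set P := (Measure.pi fun _ : Fin m => ν) with hP
  set S : (Fin m → Bool) → ℝ := fun ω => (∑ j, bX (ω j))/m with hS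
  have hq01 : 0 ≤ q ∧ q ≤ 1 := by
    constructor
    · rw [← hq]
      apply integral_nonneg
      intro t; cases t <;> simp [bX]
    · rw [← hq]
      calc ∫ t, bX t ∂ν ≤ ∫ _t : Bool, (1:ℝ) ∂ν := by
            apply integral_mono .of_finite .of_finite
            intro t; cases t <;> simp [bX]
        _ = 1 := by
            rw [integral_const, probReal_univ]
            simp
  -- first moment
  have hE1 : ∫ ω, S ω ∂P = q := by
    simp only [hS, div_eq_mul_inv]
    rw [integral_mul_const, moment1, hq]
    field_simp
  have hE1' : ∫ ω, (S ω - 1/2) ∂P = q - 1/2 := by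
    rw [integral_sub .of_finite .of_finite, hE1]
    simp
  -- second moment
  have hE2 : ∫ ω, (S ω - 1/2)^2 ∂P = q*(1-q)/m + (q - 1/2)^2 := by
    have expand : ∀ ω, (S ω - 1/2)^2
        = ((∑ j, bX (ω j))^2) * (1/m^2) - (∑ j, bX (ω j)) * (1/m) + 1/4 := by
      intro ω
      simp only [hS]
      field_simp
      ring
    simp_rw [expand]
    rw [integral_add (by exact (Integrable.of_finite).sub .of_finite) (integrable_const _),
      integral_sub (by exact (Integrable.of_finite : Integrable _ P).mul_const _)
        (by exact (Integrable.of_finite : Integrable _ P).mul_const _),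
      integral_mul_const, integral_mul_const, moment1, moment2, hq, integral_const]
    simp only [probReal_univ, ENNReal.toReal_one, smul_eq_mul, one_mul]
    field_simp
    ring
  set d := |q - 1/2| with hd
  have hd0 : 0 < d := lt_of_lt_of_le hc hcq
  have hd2 : d^2 = (q - 1/2)^2 := sq_abs _
  set A := ∫ ω, |S ω - 1/2| ∂P with hA
  -- rewrite integrand
  have hrw : ∫ ω, min (S ω) (1 - S ω) ∂P = 1/2 - A := by
    have : ∀ ω, min (S ω) (1 - S ω) = 1/2 - |S ω - 1/2| := fun ω =>
      min_eq_half_sub_abs (S ω)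
    simp_rw [this]
    rw [integral_sub (integrable_const _) .of_finite, integral_const]
    simp [hA]
  have hminq : min q (1 - q) = 1/2 - d := min_eq_half_sub_abs q
  -- lower bound on A (Jensen)
  have hA_lower : d ≤ A := by
    calc d = |∫ ω, (S ω - 1/2) ∂P| := by rw [hE1']
      _ ≤ ∫ ω, |S ω - 1/2| ∂P := by
          simpa [Real.norm_eq_abs] using
            norm_integral_le_integral_norm (μ := P) (fun ω => S ω - 1/2)
  -- upper bound on A
  have hA_upper : A ≤ d + q*(1-q)/(2*c*m) := by
    have hpt : ∀ ω, |S ω - 1/2| ≤ ((S ω - 1/2)^2 + (q - 1/2)^2) / (2*d) := by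
      intro ω
      rw [le_div_iff₀ (by linarith)]
      have h1 : (|S ω - 1/2| - d)^2 ≥ 0 := sq_nonneg _
      have h2 : |S ω - 1/2|^2 = (S ω - 1/2)^2 := sq_abs _
      nlinarith
    have step1 : A ≤ (q*(1-q)/m + 2*(q - 1/2)^2) / (2*d) := by
      calc A ≤ ∫ ω, ((S ω - 1/2)^2 + (q - 1/2)^2) / (2*d) ∂P :=
            integral_mono .of_finite .of_finite hpt
        _ = (q*(1-q)/m + 2*(q - 1/2)^2) / (2*d) := by
            simp_rw [div_eq_mul_inv]
            rw [integral_mul_const,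
              integral_add .of_finite (integrable_const _), integral_const]
            simp only [probReal_univ, ENNReal.toReal_one, one_smul, smul_eq_mul]
            rw [← div_eq_mul_inv, ← div_eq_mul_inv] at *
            rw [hE2]
            ring
    have step2 : (q*(1-q)/m + 2*(q - 1/2)^2) / (2*d) ≤ d + q*(1-q)/(2*c*m) := by
      have hqq : 0 ≤ q*(1-q) := mul_nonneg hq01.1 (by linarith [hq01.2])
      have e1 : (q*(1-q)/m + 2*(q - 1/2)^2) / (2*d)
          = q*(1-q)/(2*d*m) + d := by
        rw [← hd2]; field_simp
      rw [e1]
      have : q*(1-q)/(2*d*m) ≤ q*(1-q)/(2*c*m) := by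
        apply div_le_div_of_nonneg_left hqq (by positivity)
        · nlinarith
      linarith
    linarith
  -- combine
  have hvar : q*(1-q)/(2*c*m) ≤ (1 - 4*c^2)/(8*c*m) := by
    have hc2 : c^2 ≤ (q - 1/2)^2 := by
      rw [← hd2]; exact pow_le_pow_left₀ hc.le hcq 2
    have hkey : 0 ≤ 1/4 - c^2 - q*(1-q) := by nlinarith [hc2]
    rw [div_le_div_iff₀ (by positivity) (by positivity)]
    nlinarith [mul_nonneg (mul_nonneg (by linarith : (0:ℝ) ≤ 8*c) hm'.le) hkey]
  constructor
  · rw [hrw, hminq]; linarith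
  · rw [hrw, hminq]; linarith

noncomputable def bern (p : ℝ) (hp1 : p ≤ 1) : Measure Bool :=
  (PMF.bernoulli (Real.toNNReal p) (Real.toNNReal_le_one.mpr hp1)).toMeasure

instance (p : ℝ) (hp1 : p ≤ 1) : IsProbabilityMeasure (bern p hp1) :=
  PMF.toMeasure.isProbabilityMeasure _

lemma bern_singleton (p : ℝ) (hp0 : 0 ≤ p) (hp1 : p ≤ 1) (t : Bool) :
    (bern p hp1 {t}).toReal = if t then p else 1 - p := by
  rw [bern, PMF.toMeasure_apply_singleton _ _ (measurableSet_singleton t),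
    PMF.bernoulli_apply]
  cases t with
  | true => simp [hp0]
  | false =>
      rw [if_neg (by simp), Bool.cond_false]
      rw [ENNReal.coe_toReal, NNReal.coe_sub (Real.toNNReal_le_one.mpr hp1)]
      simp [hp0]

lemma integral_bern (p : ℝ) (hp0 : 0 ≤ p) (hp1 : p ≤ 1) (f : Bool → ℝ) :
    ∫ t, f t ∂(bern p hp1) = p * f true + (1 - p) * f false := by
  rw [integral_fintype .of_finite]
  simp [Measure.real, Fintype.sum_bool, bern_singleton p hp0 hp1, smul_eq_mul]

lemma integral_bern_bX (p : ℝ) (hp0 : 0 ≤ p) (hp1 : p ≤ 1) :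
    ∫ t, bX t ∂(bern p hp1) = p := by
  rw [integral_bern p hp0 hp1]
  simp [bX]

theorem bias_bound_well_separated
    {X : Type*} [MeasurableSpace X]
    (μ : Measure X) [IsProbabilityMeasure μ]
    (η : X → ℝ) (hη : Measurable η)
    (hη01 : ∀ x, η x ∈ Set.Icc (0 : ℝ) 1)
    (n m : ℕ) (hn : 0 < n) (hm : 0 < m)
    (κ : Kernel X (Fin m → Bool)) [IsMarkovKernel κ]
    (hκ : ∀ x, κ x = Measure.pi fun _ : Fin m =>
      (PMF.bernoulli (Real.toNNReal (η x))
        (Real.toNNReal_le_one.mpr (hη01 x).2)).toMeasure)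
    (c : ℝ) (hc : 0 < c)
    (hsep : ∀ᵐ x ∂μ, c ≤ |η x - 1 / 2|) :
    let P : Measure (Fin n → X × (Fin m → Bool)) :=
      (Measure.pi fun _ : Fin n => μ.compProd κ);
    let etaHat : (Fin n → X × (Fin m → Bool)) → Fin n → ℝ :=
      (fun ω i => (∑ j : Fin m, if (ω i).2 j then (1 : ℝ) else 0) / m);
    let betaHat : (Fin n → X × (Fin m → Bool)) → ℝ :=
      (fun ω => (∑ i : Fin n, min (etaHat ω i) (1 - etaHat ω i)) / n);
    let bayes : ℝ := (∫ x, min (η x) (1 - η x) ∂μ);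
    -((1 - 4 * c ^ 2) / (8 * c * (m : ℝ))) ≤ (∫ ω, betaHat ω ∂P) - bayes ∧
    (∫ ω, betaHat ω ∂P) - bayes ≤ 0 := by
  intro P etaHat betaHat bayes
  have hκ' : ∀ x, κ x = Measure.pi fun _ : Fin m => bern (η x) (hη01 x).2 := hκ
  set C : ℝ := (1 - 4 * c ^ 2) / (8 * c * (m : ℝ)) with hC
  set f : (Fin m → Bool) → ℝ :=
    fun v => min ((∑ j, bX (v j)) / m) (1 - (∑ j, bX (v j)) / m) with hf
  set ν' : Measure (X × (Fin m → Bool)) := μ.compProd κ with hν'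
  -- measurability and boundedness of f
  have hfmeas : Measurable f := measurable_of_countable f
  have hS01 : ∀ v : Fin m → Bool, 0 ≤ (∑ j, bX (v j)) / m ∧ (∑ j, bX (v j)) / m ≤ 1 := by
    intro v
    have hm' : (0:ℝ) < m := by exact_mod_cast hm
    have h0 : (0:ℝ) ≤ ∑ j, bX (v j) :=
      Finset.sum_nonneg fun j _ => by cases v j <;> simp [bX]
    have h1 : (∑ j, bX (v j)) ≤ (m:ℝ) := by
      calc (∑ j, bX (v j)) ≤ ∑ _j : Fin m, (1:ℝ) :=
            Finset.sum_le_sum fun j _ => by cases v j <;> simp [bX]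
        _ = m := by simp
    exact ⟨div_nonneg h0 hm'.le, by rw [div_le_one hm']; exact h1⟩
  have hfbd : ∀ v, ‖f v‖ ≤ 1 := by
    intro v
    rw [Real.norm_eq_abs, abs_le]
    obtain ⟨h0, h1⟩ := hS01 v
    constructor
    · have : (0:ℝ) ≤ f v := le_min h0 (by linarith)
      linarith
    · calc f v ≤ (∑ j, bX (v j)) / m := min_le_left _ _
        _ ≤ 1 := h1
  -- step A: reduce to one coordinate
  have hbeta : betaHat = fun ω => (∑ i : Fin n, f ((ω i).2)) / n := by
    funext ω
    simp only [betaHat, etaHat, hf, bX]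
  have hstepA : ∫ ω, betaHat ω ∂P = ∫ z, f z.2 ∂ν' := by
    rw [hbeta]
    simp only [P]
    rw [integral_div, integral_finset_sum _ (fun i _ => ?_)]
    · have : ∀ i : Fin n, ∫ ω : Fin n → X × (Fin m → Bool),
          (fun z : X × (Fin m → Bool) => f z.2) (ω i)
            ∂(Measure.pi fun _ => ν') = ∫ z, f z.2 ∂ν' :=
        fun i => pi_integral_single (ν := ν') i (fun z : X × (Fin m → Bool) => f z.2)
      simp only [← hν', this, Finset.sum_const, Finset.card_univ, Fintype.card_fin, nsmul_eq_mul]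
      have hn' : (0:ℝ) < n := by exact_mod_cast hn
      field_simp
    · refine Integrable.mono' (integrable_const 1)
        ((hfmeas.comp (measurable_snd.comp (measurable_pi_apply i))).aestronglyMeasurable)
        (ae_of_all _ fun ω => hfbd _)
  -- step B: compProd
  set G : X → ℝ := fun x => ∫ v, f v ∂(κ x) with hG
  have hgint : Integrable (fun z : X × (Fin m → Bool) => f z.2) ν' := by
    refine Integrable.mono' (integrable_const 1)
      ((hfmeas.comp measurable_snd).aestronglyMeasurable)
      (ae_of_all _ fun z => hfbd _)
  have hstepB : ∫ z, f z.2 ∂ν' = ∫ x, G x ∂μ :=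
    Measure.integral_compProd hgint
  -- a.e. bounds on G
  have hbounds : ∀ᵐ x ∂μ, min (η x) (1 - η x) - C ≤ G x ∧ G x ≤ min (η x) (1 - η x) := by
    filter_upwards [hsep] with x hx
    have hqx : ∫ t, bX t ∂(bern (η x) (hη01 x).2) = η x :=
      integral_bern_bX _ (hη01 x).1 (hη01 x).2
    have := core_bounds hm (ν := bern (η x) (hη01 x).2) hqx hc hx
    rw [hG]
    simp only [hκ' x]
    exact ⟨this.1, this.2⟩
  -- measurability of G via explicit formula
  have hGphi : G = fun x =>
      ∑ v : Fin m → Bool, (∏ j, if v j then η x else 1 - η x) * f v := by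
    funext x
    rw [hG]
    simp only [hκ' x]
    rw [pi_integral_formula]
    congr 1
    ext v
    congr 1
    exact Finset.prod_congr rfl fun j _ => bern_singleton _ (hη01 x).1 (hη01 x).2 _
  have hGmeas : Measurable G := by
    rw [hGphi]
    apply Finset.measurable_sum
    intro v _
    apply Measurable.mul _ measurable_const
    apply Finset.measurable_prod
    intro j _
    cases v j
    · exact (measurable_const.sub hη)
    · simpa using hη
  have hGbd : ∀ x, ‖G x‖ ≤ 1 := by
    intro x
    have := norm_integral_le_of_norm_le_const (μ := κ x) (f := f) (C := 1)
      (ae_of_all _ fun v => hfbd v)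
    simpa [measure_univ] using this
  have hGint : Integrable G μ :=
    Integrable.mono' (integrable_const 1) hGmeas.aestronglyMeasurable
      (ae_of_all _ hGbd)
  have hmint : Integrable (fun x => min (η x) (1 - η x)) μ := by
    refine Integrable.mono' (integrable_const 1)
      ((hη.min (measurable_const.sub hη)).aestronglyMeasurable)
      (ae_of_all _ fun x => ?_)
    rw [Real.norm_eq_abs, abs_le]
    obtain ⟨h0, h1⟩ := hη01 x
    constructor
    · have : (0:ℝ) ≤ min (η x) (1 - η x) := le_min h0 (by linarith)
      linarith
    · calc min (η x) (1 - η x) ≤ η x := min_le_left _ _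
        _ ≤ 1 := h1
  -- final comparisons
  have hup : ∫ x, G x ∂μ ≤ bayes :=
    integral_mono_ae hGint hmint (hbounds.mono fun x h => h.2)
  have hlow : bayes - C ≤ ∫ x, G x ∂μ := by
    have h1 : ∫ x, (min (η x) (1 - η x) - C) ∂μ ≤ ∫ x, G x ∂μ :=
      integral_mono_ae (hmint.sub (integrable_const C)) hGint
        (hbounds.mono fun x h => h.1)
    rw [integral_sub hmint (integrable_const C), integral_const] at h1
    simpa [measure_univ, bayes] using h1
  rw [hstepA, hstepB]
  constructor <;> linarith
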